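/- Let A ∈ (ℝ ∪ {−∞})^{m×n} be a regular matrix, let p, q ∈ ℝ^m be regular vectors, let g ∈ (ℝ ∪ {−∞})ⁿ, and set Δ = ((A (q⁻ A)⁻)⁻ p)^{1/2} and μ = Δ ⊕ q⁻ A g. Then the minimum of q⁻ A x ⊕ (A x)⁻ p over all regular vectors x ∈ ℝⁿ with x ≥ g equals μ, and this minimum is attained at the vector x = μ (q⁻ A)⁻ (which satisfies x ≥ g). -/

import Mathlib

open Finset

noncomputable section

namespace MaxPlus

/-- Max-plus multiplicative inverse: `-a` for real `a`, `⊥` for `⊥`. -/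
def tinv (a : WithBot ℝ) : WithBot ℝ := WithBot.map (fun r => -r) a

/-- Max-plus rational power `a^(1/k) = a / k`. -/
def trt (a : WithBot ℝ) (k : ℕ) : WithBot ℝ := WithBot.map (fun r => r / (k : ℝ)) a

/-- A vector is regular if it has no `⊥` (= -∞) entries. -/
def Reg {n : ℕ} (x : Fin n → WithBot ℝ) : Prop := ∀ i, x i ≠ ⊥

/-- `cdot q x = q⁻ x`, the max-plus product of the conjugate row vector `q⁻` with `x`. -/
def cdot {n : ℕ} (q x : Fin n → WithBot ℝ) : WithBot ℝ :=
  Finset.univ.sup fun i => tinv (q i) + x i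

/-- Max-plus matrix-vector product. -/
def mulVec {m n : ℕ} (A : Matrix (Fin m) (Fin n) (WithBot ℝ)) (x : Fin n → WithBot ℝ) :
    Fin m → WithBot ℝ := fun i => Finset.univ.sup fun j => A i j + x j

/-- Max-plus matrix product. -/
def tmul {l m n : ℕ} (A : Matrix (Fin l) (Fin m) (WithBot ℝ))
    (B : Matrix (Fin m) (Fin n) (WithBot ℝ)) : Matrix (Fin l) (Fin n) (WithBot ℝ) :=
  fun i j => Finset.univ.sup fun k => A i k + B k j

/-- Multiplicative conjugate transpose of a matrix. -/
def conjM {m n : ℕ} (A : Matrix (Fin m) (Fin n) (WithBot ℝ)) :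
    Matrix (Fin n) (Fin m) (WithBot ℝ) := fun i j => tinv (A j i)

/-- Max-plus identity matrix. -/
def tId {n : ℕ} : Matrix (Fin n) (Fin n) (WithBot ℝ) := fun i j => if i = j then 0 else ⊥

/-- Max-plus matrix power. -/
def tpow {n : ℕ} (A : Matrix (Fin n) (Fin n) (WithBot ℝ)) : ℕ → Matrix (Fin n) (Fin n) (WithBot ℝ)
  | 0 => tId
  | k + 1 => tmul A (tpow A k)

/-- Max-plus trace. -/
def ttr {n : ℕ} (A : Matrix (Fin n) (Fin n) (WithBot ℝ)) : WithBot ℝ :=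
  Finset.univ.sup fun i => A i i

/-- `Tr(A) = tr A ⊕ tr A² ⊕ ⋯ ⊕ tr Aⁿ`. -/
def TrOp {n : ℕ} (A : Matrix (Fin n) (Fin n) (WithBot ℝ)) : WithBot ℝ :=
  (Finset.Icc 1 n).sup fun m => ttr (tpow A m)

/-- Kleene star `A* = I ⊕ A ⊕ ⋯ ⊕ A^(n-1)`. -/
def kstar {n : ℕ} (A : Matrix (Fin n) (Fin n) (WithBot ℝ)) : Matrix (Fin n) (Fin n) (WithBot ℝ) :=
  fun i j => (Finset.range n).sup fun k => tpow A k i j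

/-- Max-plus spectral radius `λ = ⊕_{m=1}^n (tr A^m)^(1/m)`. -/
def specRad {n : ℕ} (A : Matrix (Fin n) (Fin n) (WithBot ℝ)) : WithBot ℝ :=
  (Finset.Icc 1 n).sup fun m => trt (ttr (tpow A m)) m

/-- `prodAB A B [i₁, …, i_k] = A B^{i₁} A B^{i₂} ⋯ A B^{i_k}`. -/
def prodAB {n : ℕ} (A B : Matrix (Fin n) (Fin n) (WithBot ℝ)) :
    List ℕ → Matrix (Fin n) (Fin n) (WithBot ℝ)
  | [] => tId
  | i :: t => tmul (tmul A (tpow B i)) (prodAB A B t)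

/-- The all-ones (all-`𝟙 = 0`) vector. -/
def onesV (n : ℕ) : Fin n → WithBot ℝ := fun _ => 0

end MaxPlus

open MaxPlus


namespace MaxPlusAux
lemma tinv_add (a b : WithBot ℝ) : tinv (a+b) = tinv a + tinv b := by
  cases a <;> cases b <;> simp [tinv, ← WithBot.coe_add] <;> ring_nf
lemma tinv_ne_bot {a : WithBot ℝ} (h : a ≠ ⊥) : tinv a ≠ ⊥ := by
  cases a with
  | bot => simp at h
  | coe a => simp [tinv]
lemma tinv_antitone {a b : WithBot ℝ} (ha : a ≠ ⊥) (h : a ≤ b) : tinv b ≤ tinv a := by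
  cases a with
  | bot => simp at ha
  | coe a =>
    cases b with
    | bot => simp at h
    | coe b => simp_all [tinv, WithBot.coe_le_coe]
lemma tinv_add_self {a : WithBot ℝ} (h : a ≠ ⊥) : tinv a + a = 0 := by
  cases a with
  | bot => simp at h
  | coe a => simp [tinv, ← WithBot.coe_add]
lemma wb_add_sup {ι : Type*} (s : Finset ι) (c : WithBot ℝ) (f : ι → WithBot ℝ) :
    c + s.sup f = s.sup fun i => c + f i := by
  classical
  induction s using Finset.cons_induction with
  | empty => simp
  | cons a s ha ih => rw [Finset.sup_cons, Finset.sup_cons, ← ih,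
      max_add_add_left]
lemma exists_coe {a : WithBot ℝ} (h : a ≠ ⊥) : ∃ r : ℝ, a = ↑r :=
  Option.ne_none_iff_exists'.mp h
lemma trt_coe (r : ℝ) (k : ℕ) : trt (r : WithBot ℝ) k = ((r / k : ℝ) : WithBot ℝ) := rfl
lemma tinv_coe (r : ℝ) : tinv (r : WithBot ℝ) = ((-r : ℝ) : WithBot ℝ) := rfl
end MaxPlusAux

open MaxPlusAux

theorem stmt_1 {m n : ℕ} (A : Matrix (Fin m) (Fin n) (WithBot ℝ))
    (hA : (∀ i, ∃ j, A i j ≠ ⊥) ∧ (∀ j, ∃ i, A i j ≠ ⊥))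
    (p q : Fin m → WithBot ℝ) (hp : Reg p) (hq : Reg q)
    (g : Fin n → WithBot ℝ)
    (μ : WithBot ℝ)
    (hμ : μ =
      trt (cdot (mulVec A (fun j => tinv (Finset.univ.sup fun i => tinv (q i) + A i j))) p) 2
        ⊔ cdot q (mulVec A g)) :
    (∀ x : Fin n → WithBot ℝ, Reg x → (∀ i, g i ≤ x i) →
        μ ≤ cdot q (mulVec A x) ⊔ cdot (mulVec A x) p) ∧
      Reg (fun j => μ + tinv (Finset.univ.sup fun i => tinv (q i) + A i j)) ∧
      (∀ j, g j ≤ μ + tinv (Finset.univ.sup fun i => tinv (q i) + A i j)) ∧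
      cdot q (mulVec A (fun j => μ + tinv (Finset.univ.sup fun i => tinv (q i) + A i j)))
          ⊔ cdot (mulVec A (fun j => μ + tinv (Finset.univ.sup fun i => tinv (q i) + A i j))) p
        = μ := by
  classical
  obtain ⟨hA1, hA2⟩ := hA
  rcases Nat.eq_zero_or_pos n with hn | hn
  · -- degenerate case n = 0, hence m = 0
    subst hn
    have hm0 : m = 0 := by
      rcases Nat.eq_zero_or_pos m with h | h
      · exact h
      · obtain ⟨j, -⟩ := hA1 ⟨0, h⟩
        exact j.elim0
    subst hm0
    have hμb : μ = ⊥ := by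
      simpa [cdot, mulVec, trt, Finset.univ_eq_empty] using hμ
    refine ⟨fun x _ _ => by simp [hμb], fun j => j.elim0, fun j => j.elim0, ?_⟩
    simp [cdot, mulVec, Finset.univ_eq_empty, hμb]
  · have hm : 0 < m := by
      obtain ⟨i, -⟩ := hA2 ⟨0, hn⟩
      exact i.pos
    have hmne : (Finset.univ : Finset (Fin m)).Nonempty := ⟨⟨0, hm⟩, mem_univ _⟩
    have hnne : (Finset.univ : Finset (Fin n)).Nonempty := ⟨⟨0, hn⟩, mem_univ _⟩
    -- the row vector Y = q⁻ A
    set Y : Fin n → WithBot ℝ := fun j => Finset.univ.sup fun i => tinv (q i) + A i j with hYdef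
    have hYj : ∀ j, (Finset.univ.sup fun i => tinv (q i) + A i j) = Y j := fun _ => rfl
    simp only [hYj] at hμ ⊢
    have hYbot : ∀ j, Y j ≠ ⊥ := by
      intro j h
      obtain ⟨i, hi⟩ := hA2 j
      have := (Finset.sup_eq_bot_iff _ _).1 h i (mem_univ i)
      exact (WithBot.add_ne_bot.2 ⟨tinv_ne_bot (hq i), hi⟩) this
    -- w = A (q⁻A)⁻
    set W : Fin m → WithBot ℝ := fun i => Finset.univ.sup fun j => A i j + tinv (Y j) with hWdef
    have hWi : mulVec A (fun j => tinv (Y j)) = W := rfl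
    rw [hWi] at hμ
    have hWbot : ∀ i, W i ≠ ⊥ := by
      intro i h
      obtain ⟨j, hj⟩ := hA1 i
      have := (Finset.sup_eq_bot_iff _ _).1 h j (mem_univ j)
      exact (WithBot.add_ne_bot.2 ⟨hj, tinv_ne_bot (hYbot j)⟩) this
    set D : WithBot ℝ := cdot W p with hDdef
    have hDbot : D ≠ ⊥ := by
      intro h
      obtain ⟨i, -⟩ := hmne
      have := (Finset.sup_eq_bot_iff _ _).1 h i (mem_univ i)
      exact (WithBot.add_ne_bot.2 ⟨tinv_ne_bot (hWbot i), hp i⟩) this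
    have hDle : trt D 2 ≤ μ := hμ ▸ le_sup_left
    have hgle : cdot q (mulVec A g) ≤ μ := hμ ▸ le_sup_right
    have hμbot : μ ≠ ⊥ := by
      intro h
      rw [h, le_bot_iff] at hDle
      obtain ⟨d, hd⟩ := exists_coe hDbot
      rw [hd, trt_coe] at hDle
      exact WithBot.coe_ne_bot hDle
    -- key bound: Y j + x j ≤ q⁻ A x for any x
    have keyA : ∀ (x : Fin n → WithBot ℝ) (j : Fin n), Y j + x j ≤ cdot q (mulVec A x) := by
      intro x j
      obtain ⟨i₀, -, hi₀⟩ := Finset.exists_mem_eq_sup Finset.univ hmne fun i => tinv (q i) + A i j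
      have hi₀' : Y j = tinv (q i₀) + A i₀ j := hi₀
      calc Y j + x j = tinv (q i₀) + (A i₀ j + x j) := by rw [hi₀', add_assoc]
        _ ≤ tinv (q i₀) + mulVec A x i₀ :=
            add_le_add_right (Finset.le_sup (f := fun j => A i₀ j + x j) (mem_univ j)) _
        _ ≤ cdot q (mulVec A x) := Finset.le_sup (f := fun i => tinv (q i) + mulVec A x i) (mem_univ i₀)
    have hYμ : ∀ j, Y j + g j ≤ μ := fun j => le_trans (keyA g j) hgle
    -- Goal 2
    have G2 : Reg (fun j => μ + tinv (Y j)) := fun j =>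
      WithBot.add_ne_bot.2 ⟨hμbot, tinv_ne_bot (hYbot j)⟩
    -- Goal 3
    have G3 : ∀ j, g j ≤ μ + tinv (Y j) := by
      intro j
      calc g j = tinv (Y j) + Y j + g j := by rw [tinv_add_self (hYbot j), zero_add]
        _ = tinv (Y j) + (Y j + g j) := add_assoc _ _ _
        _ ≤ tinv (Y j) + μ := add_le_add_right (hYμ j) _
        _ = μ + tinv (Y j) := add_comm _ _
    refine ⟨?_, G2, G3, ?_⟩
    · -- Goal 1
      intro x hx hgx
      set s : WithBot ℝ := cdot q (mulVec A x) with hsdef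
      set t : WithBot ℝ := cdot (mulVec A x) p with htdef
      have hAxbot : ∀ i, mulVec A x i ≠ ⊥ := by
        intro i h
        obtain ⟨j, hj⟩ := hA1 i
        have := (Finset.sup_eq_bot_iff _ _).1 h j (mem_univ j)
        exact (WithBot.add_ne_bot.2 ⟨hj, hx j⟩) this
      have hsbot : s ≠ ⊥ := by
        intro h
        obtain ⟨i, -⟩ := hmne
        have := (Finset.sup_eq_bot_iff _ _).1 h i (mem_univ i)
        exact (WithBot.add_ne_bot.2 ⟨tinv_ne_bot (hq i), hAxbot i⟩) this
      have htbot : t ≠ ⊥ := by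
        intro h
        obtain ⟨i, -⟩ := hmne
        have := (Finset.sup_eq_bot_iff _ _).1 h i (mem_univ i)
        exact (WithBot.add_ne_bot.2 ⟨tinv_ne_bot (hAxbot i), hp i⟩) this
      have hxs : ∀ j, x j ≤ s + tinv (Y j) := by
        intro j
        calc x j = tinv (Y j) + Y j + x j := by rw [tinv_add_self (hYbot j), zero_add]
          _ = tinv (Y j) + (Y j + x j) := add_assoc _ _ _
          _ ≤ tinv (Y j) + s := add_le_add_right (keyA x j) _
          _ = s + tinv (Y j) := add_comm _ _
      have hAxle : ∀ i, mulVec A x i ≤ s + W i := by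
        intro i
        apply Finset.sup_le
        intro j _
        calc A i j + x j ≤ A i j + (s + tinv (Y j)) := add_le_add_right (hxs j) _
          _ = s + (A i j + tinv (Y j)) := by rw [add_left_comm]
          _ ≤ s + W i :=
              add_le_add_right (Finset.le_sup (f := fun j => A i j + tinv (Y j)) (mem_univ j)) _
      have hDst : D ≤ s + t := by
        apply Finset.sup_le
        intro i _
        have h1 : tinv (mulVec A x i) + p i ≤ t :=
          Finset.le_sup (f := fun i => tinv (mulVec A x i) + p i) (mem_univ i)
        have h2 : tinv (s + W i) ≤ tinv (mulVec A x i) := tinv_antitone (hAxbot i) (hAxle i)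
        have h3 : tinv s + tinv (W i) + p i ≤ t := by
          rw [← tinv_add]
          exact le_trans (add_le_add_left h2 _) h1
        calc tinv (W i) + p i = s + tinv s + (tinv (W i) + p i) := by
              rw [add_comm s (tinv s), tinv_add_self hsbot, zero_add]
          _ = s + (tinv s + tinv (W i) + p i) := by abel
          _ ≤ s + t := add_le_add_right h3 _
      rw [hμ]
      apply sup_le
      · -- Δ ≤ s ⊔ t
        obtain ⟨d, hd⟩ := exists_coe hDbot
        obtain ⟨sr, hsr⟩ := exists_coe hsbot
        obtain ⟨tr, htr⟩ := exists_coe htbot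
        rw [hd, hsr, htr, ← WithBot.coe_add, WithBot.coe_le_coe] at hDst
        rw [hd, hsr, htr, trt_coe, ← WithBot.coe_sup, WithBot.coe_le_coe]
        rw [le_sup_iff]
        rcases le_total sr tr with h | h
        · right; push_cast; linarith
        · left; push_cast; linarith
      · exact le_trans (Finset.sup_mono_fun fun i _ => add_le_add_right
          (Finset.sup_mono_fun fun j _ => add_le_add_right (hgx j) _) _) le_sup_left
    · -- Goal 4
      have hAxs : ∀ i, mulVec A (fun j => μ + tinv (Y j)) i = μ + W i := by
        intro i
        have h : μ + W i = Finset.univ.sup fun j => μ + (A i j + tinv (Y j)) :=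
          wb_add_sup _ _ _
        rw [h]
        exact Finset.sup_congr rfl fun j _ => add_left_comm _ _ _
      have hseq : cdot q (mulVec A (fun j => μ + tinv (Y j))) = μ := by
        apply le_antisymm
        · apply Finset.sup_le
          intro i _
          rw [hAxs i]
          have hqw : tinv (q i) + W i ≤ 0 := by
            have h : tinv (q i) + W i = Finset.univ.sup fun j => tinv (q i) + (A i j + tinv (Y j)) :=
              wb_add_sup _ _ _
            rw [h]
            apply Finset.sup_le
            intro j _
            calc tinv (q i) + (A i j + tinv (Y j)) = tinv (q i) + A i j + tinv (Y j) :=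
                  (add_assoc _ _ _).symm
              _ ≤ Y j + tinv (Y j) :=
                  add_le_add_left (Finset.le_sup (f := fun i => tinv (q i) + A i j) (mem_univ i)) _
              _ = 0 := by rw [add_comm]; exact tinv_add_self (hYbot j)
          calc tinv (q i) + (μ + W i) = μ + (tinv (q i) + W i) := by rw [add_left_comm]
            _ ≤ μ + 0 := add_le_add_right hqw _
            _ = μ := add_zero μ
        · obtain ⟨j₀, -⟩ := hnne
          obtain ⟨i₀, -, hi₀⟩ := Finset.exists_mem_eq_sup Finset.univ hmne
            fun i => tinv (q i) + A i j₀
          have hi₀' : Y j₀ = tinv (q i₀) + A i₀ j₀ := hi₀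
          have heq : μ = tinv (q i₀) + (A i₀ j₀ + (μ + tinv (Y j₀))) := by
            rw [← add_assoc, ← hi₀', add_left_comm, add_comm (Y j₀), tinv_add_self (hYbot j₀),
              add_zero]
          calc μ = tinv (q i₀) + (A i₀ j₀ + (μ + tinv (Y j₀))) := heq
            _ ≤ tinv (q i₀) + mulVec A (fun j => μ + tinv (Y j)) i₀ :=
                add_le_add_right (Finset.le_sup (f := fun j => A i₀ j + (μ + tinv (Y j))) (mem_univ j₀)) _
            _ ≤ _ := Finset.le_sup (f := fun i => tinv (q i) + mulVec A (fun j => μ + tinv (Y j)) i)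
                (mem_univ i₀)
      have hD2μ : D ≤ μ + μ := by
        obtain ⟨d, hd⟩ := exists_coe hDbot
        obtain ⟨mr, hmr⟩ := exists_coe hμbot
        rw [hd, hmr, trt_coe, WithBot.coe_le_coe] at hDle
        rw [hd, hmr, ← WithBot.coe_add, WithBot.coe_le_coe]
        push_cast at hDle
        linarith
      have hteq : cdot (mulVec A (fun j => μ + tinv (Y j))) p ≤ μ := by
        apply Finset.sup_le
        intro i _
        rw [hAxs i, tinv_add]
        have h1 : tinv (W i) + p i ≤ D :=
          Finset.le_sup (f := fun i => tinv (W i) + p i) (mem_univ i)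
        calc tinv μ + tinv (W i) + p i = tinv μ + (tinv (W i) + p i) := add_assoc _ _ _
          _ ≤ tinv μ + D := add_le_add_right h1 _
          _ ≤ tinv μ + (μ + μ) := add_le_add_right hD2μ _
          _ = tinv μ + μ + μ := (add_assoc _ _ _).symm
          _ = μ := by rw [tinv_add_self hμbot, zero_add]
      rw [hseq]
      exact sup_eq_left.2 hteq
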